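/- Let k ≥ 2, let jobs have processing times p₁, …, p_n ∈ ℕ and speeds s₁, …, s_k ∈ (0,1], let M ≥ 0 be a real makespan target, set M' = 3·max_i ⌊s_i·M⌋, and add k dummy jobs p'_i = M' − ⌊s_i·M⌋ for i ∈ [k]. Then there is an assignment π : [n] → [k] with Σ_{j : π(j)=i} p_j ≤ ⌊s_i·M⌋ for every i ∈ [k], if and only if the n + k jobs {p_j} ∪ {p'_i} can be partitioned among k identical machines so that each machine's total processing time is at most M'. -/

import Mathlib

/-- Reduction from `Q_k ‖ C_max` to `P_k ‖ C_max`: with `M' = 3·maxᵢ ⌊sᵢ·M⌋`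
and dummy jobs `p'ᵢ = M' − ⌊sᵢ·M⌋`, there is an assignment of the `n` jobs to
the `k` uniform machines with load at most `⌊sᵢ·M⌋` on machine `i`, iff the
`n + k` jobs (originals plus dummies) can be distributed over `k` identical
machines with load at most `M'` each. -/
theorem stmt_19 (k n : ℕ) (hk : 2 ≤ k) (p : Fin n → ℕ) (s : Fin k → ℝ)
    (hs : ∀ i, 0 < s i ∧ s i ≤ 1) (M : ℝ) (hM : 0 ≤ M) :
    (∃ π : Fin n → Fin k, ∀ i : Fin k,
      (∑ j ∈ Finset.univ.filter (fun j => π j = i), (p j : ℤ)) ≤ ⌊s i * M⌋) ↔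
    (∃ m : Fin n ⊕ Fin k → Fin k, ∀ i : Fin k,
      (∑ j ∈ Finset.univ.filter (fun j => m (Sum.inl j) = i), (p j : ℤ)) +
      (∑ d ∈ Finset.univ.filter (fun d => m (Sum.inr d) = i),
        (3 * ((Finset.univ.sup fun i' => (⌊s i' * M⌋).toNat : ℕ) : ℤ) - ⌊s d * M⌋)) ≤
      3 * ((Finset.univ.sup fun i' => (⌊s i' * M⌋).toNat : ℕ) : ℤ)) := by
  have hk0 : 0 < k := by omega
  set Snat : ℕ := Finset.univ.sup fun i' => (⌊s i' * M⌋).toNat with hSnat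
  have hB0 : ∀ i, (0:ℤ) ≤ ⌊s i * M⌋ := fun i =>
    Int.floor_nonneg.mpr (mul_nonneg (hs i).1.le hM)
  have hBS : ∀ i, ⌊s i * M⌋ ≤ (Snat : ℤ) := by
    intro i
    have h1 : (⌊s i * M⌋).toNat ≤ Snat := Finset.le_sup (f := fun i' => (⌊s i' * M⌋).toNat) (Finset.mem_univ i)
    have h2 := Int.toNat_of_nonneg (hB0 i)
    omega
  constructor
  · rintro ⟨π, hπ⟩
    refine ⟨Sum.elim π id, fun i => ?_⟩
    have hfilter : Finset.univ.filter (fun d : Fin k => Sum.elim π id (Sum.inr d) = i)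
        = {i} := by
      ext d; rw [Finset.mem_filter, Finset.mem_singleton]; simp
    simp only [Sum.elim_inl, Sum.elim_inr] at hfilter ⊢
    rw [hfilter, Finset.sum_singleton]
    have := hπ i
    exact le_of_le_of_eq (add_le_add this le_rfl) (by ring)
  · rintro ⟨m, hm⟩
    by_cases hS : Snat = 0
    · refine ⟨fun j => m (Sum.inl j), fun i => ?_⟩
      have key := hm i
      have hBz : ∀ d : Fin k, ⌊s d * M⌋ = 0 := by
        intro d; have := hBS d; have := hB0 d; omega
      have hdz : (∑ d ∈ Finset.univ.filter (fun d => m (Sum.inr d) = i),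
          (3 * ((Snat : ℕ) : ℤ) - ⌊s d * M⌋)) = 0 := by
        apply Finset.sum_eq_zero
        intro d _
        rw [hBz d, hS]
        norm_num
      rw [hdz, hS] at key
      rw [hBz i]
      simpa using key
    · have hS1 : (1:ℤ) ≤ (Snat : ℤ) := by exact_mod_cast Nat.one_le_iff_ne_zero.mpr hS
      have hinj : Function.Injective (fun d : Fin k => m (Sum.inr d)) := by
        intro d1 d2 h12
        by_contra hne
        set i := m (Sum.inr d1) with hi
        have key := hm i
        have hsub : ({d1, d2} : Finset (Fin k)) ⊆
            Finset.univ.filter (fun d => m (Sum.inr d) = i) := by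
          intro d hd
          simp only [Finset.mem_insert, Finset.mem_singleton] at hd
          rcases hd with rfl | rfl
          · simp [hi]
          · simp [hi, ← h12]
        have hmono : (3 * (Snat:ℤ) - ⌊s d1 * M⌋) + (3 * (Snat:ℤ) - ⌊s d2 * M⌋) ≤
            ∑ d ∈ Finset.univ.filter (fun d => m (Sum.inr d) = i),
              (3 * (Snat:ℤ) - ⌊s d * M⌋) := by
          refine le_trans (le_of_eq
            (Finset.sum_pair (f := fun d => 3 * (Snat:ℤ) - ⌊s d * M⌋) hne).symm) ?_
          exact Finset.sum_le_sum_of_subset_of_nonneg hsub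
            (fun d _ _ => by have := hBS d; linarith)
        have hp : (0:ℤ) ≤ ∑ j ∈ Finset.univ.filter (fun j => m (Sum.inl j) = i),
            (p j : ℤ) := Finset.sum_nonneg fun j _ => by positivity
        have h1 := hBS d1
        have h2 := hBS d2
        linarith
      have hbij : Function.Bijective (fun d : Fin k => m (Sum.inr d)) :=
        (Finite.injective_iff_bijective).mp hinj
      set e : Fin k ≃ Fin k := Equiv.ofBijective _ hbij with he
      refine ⟨fun j => e.symm (m (Sum.inl j)), fun i => ?_⟩
      have key := hm (e i)
      have hfil : Finset.univ.filter (fun d => m (Sum.inr d) = e i) = {i} := by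
        ext d
        simp only [Finset.mem_filter, Finset.mem_univ, true_and, Finset.mem_singleton]
        constructor
        · intro h
          exact hinj h
        · rintro rfl
          rfl
      rw [hfil, Finset.sum_singleton] at key
      have hfil2 : Finset.univ.filter (fun j => e.symm (m (Sum.inl j)) = i)
          = Finset.univ.filter (fun j => m (Sum.inl j) = e i) := by
        ext j
        simp [Equiv.symm_apply_eq]
      rw [hfil2]
      linarith
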